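/- Let (Ω, ℱ, P) be a probability space, let R : Ω → ℝ be square-integrable and V : Ω → ℝ^m satisfy ‖V‖ = 1 almost surely, with R and V independent. Let Λ be an m×m real matrix, Σ = Λ Λᵀ, μ ∈ ℝ^m, τ > 0, ρ ∈ ℝ, and let μ_v ∈ ℝ^m be a unit vector. Define X = μ + R · (Λ V). If E[V] = ρ μ_v and E[V Vᵀ] = (ρ/τ) I + (1 − (m/τ) ρ) μ_v μ_vᵀ, then Cov[X] = E[R²] (ρ/τ) Σ + (E[R²](1 − (m/τ) ρ) − E[R]² ρ²) · Λ μ_v μ_vᵀ Λᵀ. -/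

import Mathlib

open Matrix MeasureTheory ProbabilityTheory

/-- For `X = μ + R Λ V` with `R` square-integrable, `‖V‖ = 1` a.s.,
`R`, `V` independent, `Σ = Λ Λᵀ`, `τ > 0` and a unit vector `μ_v`, if
`E[V] = ρ μ_v` and `E[V Vᵀ] = (ρ/τ) I + (1 − (m/τ)ρ) μ_v μ_vᵀ`, then
`Cov[X] = E[R²](ρ/τ) Σ + (E[R²](1 − (m/τ)ρ) − E[R]² ρ²) Λ μ_v μ_vᵀ Λᵀ`. -/
theorem vMF_covariance_closed_form
    {m : ℕ} {Ω : Type*} [MeasurableSpace Ω] (P : Measure Ω) [IsProbabilityMeasure P]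
    (R : Ω → ℝ) (V : Ω → EuclideanSpace ℝ (Fin m))
    (hR2 : MemLp R 2 P) (hVmeas : Measurable V)
    (hVnorm : ∀ᵐ ω ∂P, ‖V ω‖ = 1)
    (hindep : IndepFun R V P)
    (Λ : Matrix (Fin m) (Fin m) ℝ)
    (Sig : Matrix (Fin m) (Fin m) ℝ) (hSig : Sig = Λ * Λᵀ)
    (μ : Fin m → ℝ) (τ ρ : ℝ) (hτ : 0 < τ)
    (μv : EuclideanSpace ℝ (Fin m)) (hμv : ‖μv‖ = 1)
    (X : Ω → Fin m → ℝ)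
    (hX : ∀ ω, X ω = μ + R ω • Λ.mulVec (V ω))
    (hEV : ∫ ω, V ω ∂P = ρ • μv)
    (hEVV : ∀ i j, ∫ ω, V ω i * V ω j ∂P =
      ((ρ / τ) • (1 : Matrix (Fin m) (Fin m) ℝ)
        + (1 - ((m : ℝ) / τ) * ρ) • Matrix.vecMulVec μv μv) i j) :
    (Matrix.of fun i j =>
        (∫ ω, X ω i * X ω j ∂P) - (∫ ω, X ω i ∂P) * (∫ ω, X ω j ∂P)) =
      ((∫ ω, (R ω) ^ 2 ∂P) * (ρ / τ)) • Sig
        + ((∫ ω, (R ω) ^ 2 ∂P) * (1 - ((m : ℝ) / τ) * ρ)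
            - (∫ ω, R ω ∂P) ^ 2 * ρ ^ 2) • (Λ * Matrix.vecMulVec μv μv * Λᵀ) := by
  classical
  set r1 : ℝ := ∫ ω, R ω ∂P with hr1
  set r2 : ℝ := ∫ ω, (R ω) ^ 2 ∂P with hr2
  set a : Fin m → ℝ := Λ.mulVec μv with ha
  set c : ℝ := 1 - ((m : ℝ) / τ) * ρ with hc
  -- basic integrability facts
  have hRint : Integrable R P := hR2.integrable one_le_two
  have hR2int : Integrable (fun ω => R ω ^ 2) P := hR2.integrable_sq
  have habs : ∀ (k : Fin m) (x : EuclideanSpace ℝ (Fin m)), |x k| ≤ ‖x‖ := by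
    intro k x
    rw [EuclideanSpace.norm_eq, ← Real.sqrt_sq (abs_nonneg (x k))]
    apply Real.sqrt_le_sqrt
    calc |x k| ^ 2 = ‖x k‖ ^ 2 := by rw [Real.norm_eq_abs]
      _ ≤ _ := Finset.single_le_sum (fun i _ => sq_nonneg ‖x i‖) (Finset.mem_univ k)
  have hVkbd : ∀ k : Fin m, ∀ᵐ ω ∂P, ‖V ω k‖ ≤ 1 := by
    intro k
    filter_upwards [hVnorm] with ω hω
    rw [Real.norm_eq_abs]
    calc |V ω k| ≤ ‖V ω‖ := habs k (V ω)
      _ = 1 := hω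
  have hVkmeas : ∀ k : Fin m, Measurable fun ω => V ω k := fun k =>
    (measurable_pi_apply k).comp ((WithLp.measurable_ofLp 2 _).comp hVmeas)
  have hVkint : ∀ k : Fin m, Integrable (fun ω => V ω k) P := fun k =>
    Integrable.bdd_mul (c := 1) (integrable_const 1) (hVkmeas k).aestronglyMeasurable
      (hVkbd k) |>.congr (by filter_upwards with ω; simp)
  have hVVint : ∀ k l : Fin m, Integrable (fun ω => V ω k * V ω l) P := fun k l =>
    Integrable.bdd_mul (c := 1) (hVkint l) (hVkmeas k).aestronglyMeasurable (hVkbd k)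
  have hVint : Integrable V P := by
    refine Integrable.mono' (integrable_const (1 : ℝ)) hVmeas.aestronglyMeasurable ?_
    filter_upwards [hVnorm] with ω hω
    rw [hω]
  -- componentwise first moment of V
  have hEVk : ∀ k : Fin m, ∫ ω, V ω k ∂P = ρ * μv k := by
    intro k
    have := ((EuclideanSpace.proj k :
        EuclideanSpace ℝ (Fin m) →L[ℝ] ℝ).integral_comp_comm hVint).symm
    simpa [hEV] using this.symm
  -- mixed moments via independence
  have hRVint : ∀ k : Fin m, Integrable (fun ω => R ω * V ω k) P := fun k => by
    have := Integrable.bdd_mul (c := 1) hRint (hVkmeas k).aestronglyMeasurable (hVkbd k)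
    exact this.congr (by filter_upwards with ω; ring_nf)
  have hERV : ∀ k : Fin m, ∫ ω, R ω * V ω k ∂P = r1 * (ρ * μv k) := by
    intro k
    have hi : IndepFun R (fun ω => V ω k) P :=
      hindep.comp measurable_id ((measurable_pi_apply k).comp (WithLp.measurable_ofLp 2 _))
    have h := hi.integral_fun_mul_eq_mul_integral hRint.aestronglyMeasurable (hVkint k).aestronglyMeasurable
    have h2 : r1 * (ρ * μv k) = (∫ ω, R ω ∂P) * ∫ ω, V ω k ∂P := by rw [hEVk k]
    exact h.trans h2.symm
  have hR2VVint : ∀ k l : Fin m, Integrable (fun ω => R ω ^ 2 * (V ω k * V ω l)) P := by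
    intro k l
    have h1 := Integrable.bdd_mul (c := 1) hR2int (hVkmeas k).aestronglyMeasurable (hVkbd k)
    have h2 := Integrable.bdd_mul (c := 1) h1 (hVkmeas l).aestronglyMeasurable (hVkbd l)
    exact h2.congr (by filter_upwards with ω; ring_nf)
  have hM : ∀ k l : Fin m, ∫ ω, V ω k * V ω l ∂P =
      (ρ / τ) * (if k = l then 1 else 0) + c * (μv k * μv l) := by
    intro k l
    rw [hEVV k l]
    simp [Matrix.one_apply, Matrix.vecMulVec_apply, hc]
  have hER2VV : ∀ k l : Fin m, ∫ ω, R ω ^ 2 * (V ω k * V ω l) ∂P =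
      r2 * ((ρ / τ) * (if k = l then 1 else 0) + c * (μv k * μv l)) := by
    intro k l
    have hi : IndepFun (fun ω => R ω ^ 2) (fun ω => V ω k * V ω l) P :=
      hindep.comp (measurable_id.pow_const 2)
        (((measurable_pi_apply k).mul (measurable_pi_apply l) :
          Measurable fun f : Fin m → ℝ => f k * f l).comp (WithLp.measurable_ofLp 2 _))
    have h := hi.integral_fun_mul_eq_mul_integral hR2int.aestronglyMeasurable (hVVint k l).aestronglyMeasurable
    have h2 : r2 * ((ρ / τ) * (if k = l then 1 else 0) + c * (μv k * μv l))
        = (∫ ω, R ω ^ 2 ∂P) * ∫ ω, V ω k * V ω l ∂P := by rw [hM k l]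
    exact h.trans h2.symm
  -- the linear part g i ω = R ω * (Λ.mulVec (V ω)) i
  set g : Fin m → Ω → ℝ := fun i ω => R ω * (Λ.mulVec (V ω)) i with hg
  have hgexp : ∀ i ω, g i ω = ∑ k, Λ i k * (R ω * V ω k) := by
    intro i ω
    simp only [hg, Matrix.mulVec, dotProduct, Finset.mul_sum]
    exact Finset.sum_congr rfl fun k _ => by ring
  have hgint : ∀ i, Integrable (g i) P := by
    intro i
    have : Integrable (fun ω => ∑ k, Λ i k * (R ω * V ω k)) P :=
      integrable_finset_sum _ fun k _ => (hRVint k).const_mul _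
    exact this.congr (by filter_upwards with ω; rw [hgexp i ω])
  have hEg : ∀ i, ∫ ω, g i ω ∂P = r1 * ρ * a i := by
    intro i
    calc ∫ ω, g i ω ∂P = ∫ ω, ∑ k, Λ i k * (R ω * V ω k) ∂P := by
          apply integral_congr_ae; filter_upwards with ω; rw [hgexp i ω]
      _ = ∑ k, Λ i k * (r1 * (ρ * μv k)) := by
          rw [integral_finset_sum _ fun k _ => (hRVint k).const_mul _]
          exact Finset.sum_congr rfl fun k _ => by rw [integral_const_mul, hERV k]
      _ = r1 * ρ * a i := by
          simp only [ha, Matrix.mulVec, dotProduct, Finset.mul_sum]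
          exact Finset.sum_congr rfl fun k _ => by ring
  have hggexp : ∀ i j ω, g i ω * g j ω =
      ∑ k, ∑ l, Λ i k * Λ j l * (R ω ^ 2 * (V ω k * V ω l)) := by
    intro i j ω
    rw [hgexp i ω, hgexp j ω, Finset.sum_mul_sum]
    exact Finset.sum_congr rfl fun k _ => Finset.sum_congr rfl fun l _ => by ring
  have hggint : ∀ i j, Integrable (fun ω => g i ω * g j ω) P := by
    intro i j
    have : Integrable (fun ω => ∑ k, ∑ l, Λ i k * Λ j l * (R ω ^ 2 * (V ω k * V ω l))) P :=
      integrable_finset_sum _ fun k _ =>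
        integrable_finset_sum _ fun l _ => (hR2VVint k l).const_mul _
    exact this.congr (by filter_upwards with ω; rw [hggexp i j ω])
  -- the key double-sum computation
  have hsum : ∀ i j : Fin m,
      ∑ k, ∑ l, Λ i k * Λ j l * (r2 * ((ρ / τ) * (if k = l then 1 else 0) + c * (μv k * μv l)))
      = r2 * (ρ / τ) * (∑ k, Λ i k * Λ j k)
        + r2 * c * ((∑ k, Λ i k * μv k) * (∑ l, Λ j l * μv l)) := by
    intro i j
    have step1 : ∀ k : Fin m,
        ∑ l, Λ i k * Λ j l * (r2 * ((ρ / τ) * (if k = l then 1 else 0) + c * (μv k * μv l)))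
        = r2 * (ρ / τ) * (Λ i k * Λ j k)
          + (r2 * c * (Λ i k * μv k)) * (∑ l, Λ j l * μv l) := by
      intro k
      calc ∑ l, Λ i k * Λ j l * (r2 * ((ρ / τ) * (if k = l then 1 else 0) + c * (μv k * μv l)))
          = ∑ l, ((if l = k then r2 * (ρ / τ) * (Λ i k * Λ j k) else 0)
              + (r2 * c * (Λ i k * μv k)) * (Λ j l * μv l)) := by
            refine Finset.sum_congr rfl fun l _ => ?_
            by_cases h : k = l
            · subst h; rw [if_pos rfl, if_pos rfl]; ring
            · rw [if_neg h, if_neg (Ne.symm h)]; ring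
        _ = r2 * (ρ / τ) * (Λ i k * Λ j k)
              + (r2 * c * (Λ i k * μv k)) * (∑ l, Λ j l * μv l) := by
            rw [Finset.sum_add_distrib, Finset.sum_ite_eq' Finset.univ k
              (fun _ => r2 * (ρ / τ) * (Λ i k * Λ j k)), if_pos (Finset.mem_univ k),
              ← Finset.mul_sum]
    calc ∑ k, ∑ l, Λ i k * Λ j l * (r2 * ((ρ / τ) * (if k = l then 1 else 0) + c * (μv k * μv l)))
        = ∑ k, (r2 * (ρ / τ) * (Λ i k * Λ j k)
            + (r2 * c * (Λ i k * μv k)) * (∑ l, Λ j l * μv l)) :=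
          Finset.sum_congr rfl fun k _ => step1 k
      _ = r2 * (ρ / τ) * (∑ k, Λ i k * Λ j k)
            + r2 * c * ((∑ k, Λ i k * μv k) * (∑ l, Λ j l * μv l)) := by
          rw [Finset.sum_add_distrib, ← Finset.mul_sum, ← Finset.sum_mul, ← Finset.mul_sum]
          ring
  have hSigsum : ∀ i j : Fin m, Sig i j = ∑ k, Λ i k * Λ j k := by
    intro i j
    rw [hSig]
    simp [Matrix.mul_apply, Matrix.transpose_apply]
  have hasum : ∀ i : Fin m, a i = ∑ k, Λ i k * μv k := fun i => rfl
  have hEgg : ∀ i j, ∫ ω, g i ω * g j ω ∂P =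
      r2 * ((ρ / τ) * Sig i j + c * (a i * a j)) := by
    intro i j
    calc ∫ ω, g i ω * g j ω ∂P
        = ∫ ω, ∑ k, ∑ l, Λ i k * Λ j l * (R ω ^ 2 * (V ω k * V ω l)) ∂P := by
          apply integral_congr_ae; filter_upwards with ω; rw [hggexp i j ω]
      _ = ∑ k, ∑ l, Λ i k * Λ j l *
            (r2 * ((ρ / τ) * (if k = l then 1 else 0) + c * (μv k * μv l))) := by
          rw [integral_finset_sum _ fun k _ =>
            integrable_finset_sum _ fun l _ => (hR2VVint k l).const_mul _]
          refine Finset.sum_congr rfl fun k _ => ?_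
          rw [integral_finset_sum _ fun l _ => (hR2VVint k l).const_mul _]
          exact Finset.sum_congr rfl fun l _ => by rw [integral_const_mul, hER2VV k l]
      _ = r2 * ((ρ / τ) * Sig i j + c * (a i * a j)) := by
          rw [hsum i j, hSigsum i j, hasum i, hasum j]; ring
  -- integrals of X components
  have hXeq : ∀ i, ∀ᵐ ω ∂P, X ω i = μ i + g i ω := by
    intro i
    filter_upwards with ω
    rw [hX ω]
    simp [hg]
  have hXint : ∀ i, Integrable (fun ω => X ω i) P := by
    intro i
    have h0 : Integrable (fun ω => μ i + g i ω) P := (integrable_const _).add (hgint i)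
    exact h0.congr (by filter_upwards [hXeq i] with ω hω; rw [hω])
  have hEX : ∀ i, ∫ ω, X ω i ∂P = μ i + r1 * ρ * a i := by
    intro i
    calc ∫ ω, X ω i ∂P = ∫ ω, (μ i + g i ω) ∂P := integral_congr_ae (hXeq i)
      _ = μ i + r1 * ρ * a i := by
          rw [integral_add (integrable_const _) (hgint i), integral_const, hEg i]
          simp
  have hEXX : ∀ i j, ∫ ω, X ω i * X ω j ∂P =
      μ i * μ j + μ i * (r1 * ρ * a j) + μ j * (r1 * ρ * a i)
        + r2 * ((ρ / τ) * Sig i j + c * (a i * a j)) := by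
    intro i j
    have I1 : Integrable (fun ω => μ i * μ j + μ i * g j ω) P :=
      (integrable_const _).add ((hgint j).const_mul _)
    have I2 : Integrable (fun ω => μ i * μ j + μ i * g j ω + μ j * g i ω) P :=
      I1.add ((hgint i).const_mul _)
    calc ∫ ω, X ω i * X ω j ∂P
        = ∫ ω, (μ i * μ j + μ i * g j ω + μ j * g i ω + g i ω * g j ω) ∂P := by
          apply integral_congr_ae
          filter_upwards [hXeq i, hXeq j] with ω h1 h2
          rw [h1, h2]; ring
      _ = μ i * μ j + μ i * (r1 * ρ * a j) + μ j * (r1 * ρ * a i)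
            + r2 * ((ρ / τ) * Sig i j + c * (a i * a j)) := by
          rw [integral_add I2 (hggint i j), integral_add I1 ((hgint i).const_mul _),
            integral_add (integrable_const _) ((hgint j).const_mul _), integral_const,
            integral_const_mul, integral_const_mul, hEg i, hEg j, hEgg i j]
          simp
  -- outer-product matrix entry
  have houter : ∀ i j, (Λ * Matrix.vecMulVec μv μv * Λᵀ) i j = a i * a j := by
    intro i j
    simp only [Matrix.mul_apply, Matrix.vecMulVec_apply, Matrix.transpose_apply,
      ha, Matrix.mulVec, dotProduct, Finset.sum_mul, Finset.mul_sum]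
    exact Finset.sum_congr rfl fun k _ => Finset.sum_congr rfl fun l _ => by ring
  -- conclude entrywise
  ext i j
  simp only [Matrix.of_apply, Matrix.add_apply, Matrix.smul_apply, smul_eq_mul,
    hEXX i j, hEX i, hEX j, houter i j]
  ring
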